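/- Let ω be an environment, fix a ∈ ℤ and let f : ℤ → ℝ be defined by f(x) = Σ_{i=a}^{x−1} e^{V(i)−V(a)} for x ≥ a (with f(a) = 0) and f(x) = −Σ_{i=x}^{a−1} e^{V(i)−V(a)} for x < a, where V is the potential of ω. Let (Ω, ℱ, (ℱ_n)_{n∈ℕ}, ℙ) be a filtered probability space and (ξ_n)_{n∈ℕ} an adapted ℤ-valued process with ξ_0 = z constant for some z ∈ ℤ, such that almost surely for every n, 𝔼[1_{{ξ_{n+1} = ξ_n + 1}} | ℱ_n] = ω⁺_{ξ_n}/(ω⁺_{ξ_n} + ω⁻_{ξ_n}) and 𝔼[1_{{ξ_{n+1} = ξ_n − 1}} | ℱ_n] = ω⁻_{ξ_n}/(ω⁺_{ξ_n} + ω⁻_{ξ_n}). Then the process (f(ξ_n))_{n∈ℕ} is a martingale with respect to (ℱ_n) and ℙ. -/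

import Mathlib

open Real MeasureTheory ProbabilityTheory

/-- The potential `V` of the environment. -/
noncomputable def potential (ωm ωp : ℤ → ℝ) : ℤ → ℝ := fun x =>
  if 0 ≤ x then ∑ i ∈ Finset.range x.toNat, Real.log (ωm ((i : ℤ) + 1) / ωp ((i : ℤ) + 1))
  else ∑ i ∈ Finset.range (-x).toNat, Real.log (ωp (x + 1 + (i : ℤ)) / ωm (x + 1 + (i : ℤ)))

/-- The Lyapunov function `f` associated to the potential `V` with base point `a`:
`f x = ∑_{i=a}^{x-1} e^{V(i) - V(a)}` for `x ≥ a` and `f x = -∑_{i=x}^{a-1} e^{V(i) - V(a)}`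
for `x < a`. -/
noncomputable def lyap (V : ℤ → ℝ) (a : ℤ) : ℤ → ℝ := fun x =>
  if a ≤ x then ∑ i ∈ Finset.range (x - a).toNat, Real.exp (V (a + (i : ℤ)) - V a)
  else -∑ i ∈ Finset.range (a - x).toNat, Real.exp (V (x + (i : ℤ)) - V a)

lemma pot_neg_formula (ωm ωp : ℤ → ℝ) {x : ℤ} (hx : x ≤ 0) :
    potential ωm ωp x
      = ∑ i ∈ Finset.range (-x).toNat, Real.log (ωp (x + 1 + (i : ℤ)) / ωm (x + 1 + (i : ℤ))) := by
  rcases eq_or_lt_of_le hx with h | h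
  · subst h; simp [potential]
  · simp [potential, not_le.mpr h]

lemma pot_step (ωm ωp : ℤ → ℝ) (x : ℤ) :
    potential ωm ωp x = potential ωm ωp (x - 1) + Real.log (ωm x / ωp x) := by
  rcases le_or_gt 1 x with h | h
  · have h0 : (0:ℤ) ≤ x := by omega
    have h1 : (0:ℤ) ≤ x - 1 := by omega
    have hxt : x.toNat = (x-1).toNat + 1 := by omega
    simp only [potential, if_pos h0, if_pos h1, hxt, Finset.sum_range_succ]
    have : ((x-1).toNat : ℤ) + 1 = x := by omega
    rw [this]
  · have hx0 : x ≤ 0 := by omega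
    have hx1 : x - 1 ≤ 0 := by omega
    rw [pot_neg_formula ωm ωp hx0, pot_neg_formula ωm ωp hx1]
    have ht : (-(x-1)).toNat = (-x).toNat + 1 := by omega
    rw [ht, Finset.sum_range_succ']
    have e1 : ∀ i : ℕ, x - 1 + 1 + ((i:ℤ) + 1) = x + 1 + (i:ℤ) := by intro i; ring
    have e0 : x - 1 + 1 + ((0:ℕ):ℤ) = x := by push_cast; ring
    simp only [Nat.cast_add, Nat.cast_one, e1, e0]
    rw [show Real.log (ωm x / ωp x) = -Real.log (ωp x / ωm x) from by
      rw [← Real.log_inv, inv_div]]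
    ring

lemma exp_pot_step (ωm ωp : ℤ → ℝ) (hm : ∀ y, 0 < ωm y) (hp : ∀ y, 0 < ωp y) (x : ℤ) :
    Real.exp (potential ωm ωp x - potential ωm ωp (x - 1)) = ωm x / ωp x := by
  rw [pot_step ωm ωp x]
  simp [Real.exp_log (div_pos (hm x) (hp x))]

lemma lyap_step (V : ℤ → ℝ) (a x : ℤ) :
    lyap V a (x + 1) = lyap V a x + Real.exp (V x - V a) := by
  rcases le_or_gt a x with h | h
  · have h1 : a ≤ x + 1 := by omega
    have ht : (x + 1 - a).toNat = (x - a).toNat + 1 := by omega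
    simp only [lyap, if_pos h, if_pos h1, ht, Finset.sum_range_succ]
    have : a + ((x - a).toNat : ℤ) = x := by omega
    rw [this]
  · rcases eq_or_lt_of_le (by omega : x + 1 ≤ a) with he | hlt
    · have h1 : a ≤ x + 1 := by omega
      have ht0 : (x + 1 - a).toNat = 0 := by omega
      have ht1 : (a - x).toNat = 1 := by omega
      simp only [lyap, if_pos h1, if_neg (not_le.mpr h), ht0, ht1, Finset.sum_range_zero,
        Finset.sum_range_one]
      push_cast
      ring
    · have h1 : ¬ a ≤ x + 1 := by omega
      have ht : (a - x).toNat = (a - (x+1)).toNat + 1 := by omega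
      simp only [lyap, if_neg (not_le.mpr h), if_neg h1, ht, Finset.sum_range_succ']
      have e1 : ∀ i : ℕ, x + ((i:ℤ) + 1) = x + 1 + (i:ℤ) := by intro i; ring
      have e0 : x + ((0:ℕ):ℤ) = x := by push_cast; ring
      simp only [Nat.cast_add, Nat.cast_one, e1, e0]
      ring


/-- If `(ξ_n)` is the discrete-time random walk in the environment `ω` started at `z`
(adapted, with the conditional one-step transition probabilities of the RWRE), then
`(f(ξ_n))_n` is a martingale, where `f` is the Lyapunov function of the potential `V`. -/
theorem lyap_rwre_martingale (ωm ωp : ℤ → ℝ) (hm : ∀ x, 0 < ωm x) (hp : ∀ x, 0 < ωp x)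
    (a : ℤ) {Ω : Type*} {m0 : MeasurableSpace Ω} (μ : Measure Ω) [IsProbabilityMeasure μ]
    (ℱ : Filtration ℕ m0) (ξ : ℕ → Ω → ℤ) (hadapted : Adapted ℱ ξ)
    (z : ℤ) (h0 : ∀ ω', ξ 0 ω' = z)
    (hstep_up : ∀ n : ℕ,
      μ[Set.indicator {ω' | ξ (n + 1) ω' = ξ n ω' + 1} (fun _ => (1 : ℝ)) | ℱ n]
        =ᵐ[μ] fun ω' => ωp (ξ n ω') / (ωp (ξ n ω') + ωm (ξ n ω')))
    (hstep_down : ∀ n : ℕ,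
      μ[Set.indicator {ω' | ξ (n + 1) ω' = ξ n ω' - 1} (fun _ => (1 : ℝ)) | ℱ n]
        =ᵐ[μ] fun ω' => ωm (ξ n ω') / (ωp (ξ n ω') + ωm (ξ n ω'))) :
    Martingale (fun n ω' => lyap (potential ωm ωp) a (ξ n ω')) ℱ μ := by
  set V := potential ωm ωp with hV
  -- basic measurability
  have hmeasF : ∀ k, Measurable[ℱ k] (ξ k) := fun k => hadapted k
  have hmeas : ∀ k, Measurable (ξ k) := fun k => (hmeasF k).mono (ℱ.le k) le_rfl
  have hcompF : ∀ (k : ℕ) (h : ℤ → ℝ), StronglyMeasurable[ℱ k] fun ω' => h (ξ k ω') :=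
    fun k h => ((measurable_of_countable h).comp (hmeasF k)).stronglyMeasurable
  have hcomp : ∀ (k : ℕ) (h : ℤ → ℝ), Measurable fun ω' => h (ξ k ω') :=
    fun k h => (measurable_of_countable h).comp (hmeas k)
  have hsumpos : ∀ x : ℤ, 0 < ωp x + ωm x := fun x => add_pos (hp x) (hm x)
  -- the events
  set A : ℕ → Set Ω := fun n => {ω' | ξ (n + 1) ω' = ξ n ω' + 1} with hA
  set B : ℕ → Set Ω := fun n => {ω' | ξ (n + 1) ω' = ξ n ω' - 1} with hB
  have hAm : ∀ n, MeasurableSet (A n) := by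
    intro n
    have : A n = (fun ω' => ξ (n + 1) ω' - ξ n ω') ⁻¹' {1} := by
      ext ω'; simp only [hA, Set.mem_setOf_eq, Set.mem_preimage, Set.mem_singleton_iff]; omega
    rw [this]
    exact ((hmeas (n + 1)).sub (hmeas n)) (measurableSet_singleton 1)
  have hBm : ∀ n, MeasurableSet (B n) := by
    intro n
    have : B n = (fun ω' => ξ (n + 1) ω' - ξ n ω') ⁻¹' {-1} := by
      ext ω'; simp only [hB, Set.mem_setOf_eq, Set.mem_preimage, Set.mem_singleton_iff]; omega
    rw [this]
    exact ((hmeas (n + 1)).sub (hmeas n)) (measurableSet_singleton (-1))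
  set IA : ℕ → Ω → ℝ := fun n => (A n).indicator fun _ => (1 : ℝ) with hIA
  set IB : ℕ → Ω → ℝ := fun n => (B n).indicator fun _ => (1 : ℝ) with hIB
  have intIA : ∀ n, Integrable (IA n) μ := fun n => (integrable_const 1).indicator (hAm n)
  have intIB : ∀ n, Integrable (IB n) μ := fun n => (integrable_const 1).indicator (hBm n)
  -- almost surely the walk makes ±1 steps
  have hstep : ∀ n, ∀ᵐ ω' ∂μ, ξ (n + 1) ω' = ξ n ω' + 1 ∨ ξ (n + 1) ω' = ξ n ω' - 1 := by
    intro n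
    have hdisj : ∀ ω', ¬(ω' ∈ A n ∧ ω' ∈ B n) := by
      rintro ω' ⟨h1, h2⟩
      simp only [hA, hB, Set.mem_setOf_eq] at h1 h2
      omega
    have hc : μ[IA n + IB n | ℱ n] =ᵐ[μ] fun _ => (1 : ℝ) := by
      refine (condExp_add (intIA n) (intIB n) (ℱ n)).trans ?_
      refine (Filter.EventuallyEq.add (hstep_up n) (hstep_down n)).trans (Filter.EventuallyEq.of_eq ?_)
      funext ω'
      rw [Pi.add_apply, ← add_div, div_self (ne_of_gt (hsumpos (ξ n ω')))]
    have hsumint : ∫ ω', (IA n ω' + IB n ω') ∂μ = 1 := by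
      calc ∫ ω', (IA n ω' + IB n ω') ∂μ
          = ∫ ω', (μ[IA n + IB n | ℱ n]) ω' ∂μ := (integral_condExp (ℱ.le n)).symm
        _ = ∫ _ω', (1 : ℝ) ∂μ := integral_congr_ae hc
        _ = 1 := by simp
    have hnonneg : 0 ≤ fun ω' => 1 - (IA n ω' + IB n ω') := by
      intro ω'
      have hv : IA n ω' + IB n ω' ≤ 1 := by
        by_cases h1 : ω' ∈ A n
        · have h2 : ω' ∉ B n := fun h2 => hdisj ω' ⟨h1, h2⟩
          simp [hIA, hIB, Set.indicator_of_mem h1, Set.indicator_of_notMem h2]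
        · by_cases h2 : ω' ∈ B n <;>
            simp [hIA, hIB, h1, Set.indicator_apply, h2]
      simp only [Pi.zero_apply]
      linarith
    have hint : Integrable (fun ω' => 1 - (IA n ω' + IB n ω')) μ :=
      (integrable_const 1).sub ((intIA n).add (intIB n))
    have hzero : ∫ ω', (1 - (IA n ω' + IB n ω')) ∂μ = 0 := by
      have h := integral_sub (μ := μ) (integrable_const (1 : ℝ)) ((intIA n).add (intIB n))
      simp only [Pi.add_apply] at h
      rw [h, hsumint]
      simp
    have := (integral_eq_zero_iff_of_nonneg hnonneg hint).mp hzero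
    filter_upwards [this] with ω' hω'
    by_contra hcon
    push_neg at hcon
    have h1 : IA n ω' = 0 := by
      apply Set.indicator_of_notMem
      simpa only [hA, Set.mem_setOf_eq] using hcon.1
    have h2 : IB n ω' = 0 := by
      apply Set.indicator_of_notMem
      simpa only [hB, Set.mem_setOf_eq] using hcon.2
    simp only [Pi.zero_apply] at hω'
    rw [h1, h2] at hω'
    norm_num at hω'
  -- a.s. bound for the walk
  have hbound : ∀ n : ℕ, ∀ᵐ ω' ∂μ, ξ n ω' ∈ Finset.Icc (z - n) (z + n) := by
    intro n
    induction n with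
    | zero => exact ae_of_all _ fun ω' => by simp [h0 ω']
    | succ n ih =>
      filter_upwards [ih, hstep n] with ω' h1 h2
      simp only [Finset.mem_Icc] at h1 ⊢
      push_cast
      push_cast at h1
      omega
  -- integrability of any function of the walk
  have hInt : ∀ (n : ℕ) (h : ℤ → ℝ), Integrable (fun ω' => h (ξ n ω')) μ := by
    intro n h
    have hs : (Finset.Icc (z - (n : ℤ)) (z + n)).Nonempty := ⟨z, Finset.mem_Icc.mpr (by omega)⟩
    refine Integrable.mono'
      (integrable_const ((Finset.Icc (z - (n : ℤ)) (z + n)).sup' hs fun x => |h x|))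
      (hcomp n h).aestronglyMeasurable ?_
    filter_upwards [hbound n] with ω' hω'
    rw [Real.norm_eq_abs]
    exact Finset.le_sup' (fun x => |h x|) hω'
  -- key pointwise identity
  have hpt : ∀ x : ℤ,
      Real.exp (V x - V a) * (ωp x / (ωp x + ωm x))
        = Real.exp (V (x - 1) - V a) * (ωm x / (ωp x + ωm x)) := by
    intro x
    have h1 : Real.exp (V x - V a) = Real.exp (V (x - 1) - V a) * (ωm x / ωp x) := by
      rw [← exp_pot_step ωm ωp hm hp x, ← Real.exp_add]
      congr 1
      ring
    rw [h1]
    field_simp [(hp x).ne', (hsumpos x).ne']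
  refine martingale_nat (fun n => hcompF n _) (fun n => hInt n _) fun n => ?_
  set G : Ω → ℝ := fun ω' => lyap V a (ξ n ω') with hG
  set U : Ω → ℝ := fun ω' => Real.exp (V (ξ n ω') - V a) with hU
  set D : Ω → ℝ := fun ω' => Real.exp (V (ξ n ω' - 1) - V a) with hD
  -- a.e. decomposition of the next value
  have hae : (fun ω' => lyap V a (ξ (n + 1) ω'))
      =ᵐ[μ] G + U * IA n - D * IB n := by
    filter_upwards [hstep n] with ω' hω'
    simp only [Pi.add_apply, Pi.sub_apply, Pi.mul_apply, hIA, hIB]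
    rcases hω' with h | h
    · have hBn : ω' ∉ B n := by simp only [hB, Set.mem_setOf_eq]; omega
      have hAn : ω' ∈ A n := h
      rw [h, lyap_step, Set.indicator_of_mem hAn, Set.indicator_of_notMem hBn]
      simp [hG, hU]
    · have hAn : ω' ∉ A n := by simp only [hA, Set.mem_setOf_eq]; omega
      have hBn : ω' ∈ B n := h
      have hls := lyap_step V a (ξ n ω' - 1)
      rw [sub_add_cancel] at hls
      rw [h, Set.indicator_of_mem hBn, Set.indicator_of_notMem hAn]
      simp only [hG, hD, mul_zero, mul_one, add_zero]
      linarith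
  -- integrability of the pieces
  have intG : Integrable G μ := hInt n _
  have intUIA : Integrable (U * IA n) μ := by
    refine Integrable.mono' (hInt n fun x => |Real.exp (V x - V a)|)
      (((hcomp n fun x => Real.exp (V x - V a)).mul
        (measurable_const.indicator (hAm n))).aestronglyMeasurable) (ae_of_all _ fun ω' => ?_)
    simp only [Pi.mul_apply, norm_mul, Real.norm_eq_abs]
    calc |U ω'| * |IA n ω'| ≤ |U ω'| * 1 := by
          refine mul_le_mul_of_nonneg_left ?_ (abs_nonneg _)
          simp only [hIA, Set.indicator_apply]
          split_ifs <;> simp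
      _ = |Real.exp (V (ξ n ω') - V a)| := by rw [mul_one]
  have intDIB : Integrable (D * IB n) μ := by
    refine Integrable.mono' (hInt n fun x => |Real.exp (V (x - 1) - V a)|)
      (((hcomp n fun x => Real.exp (V (x - 1) - V a)).mul
        (measurable_const.indicator (hBm n))).aestronglyMeasurable) (ae_of_all _ fun ω' => ?_)
    simp only [Pi.mul_apply, norm_mul, Real.norm_eq_abs]
    calc |D ω'| * |IB n ω'| ≤ |D ω'| * 1 := by
          refine mul_le_mul_of_nonneg_left ?_ (abs_nonneg _)
          simp only [hIB, Set.indicator_apply]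
          split_ifs <;> simp
      _ = |Real.exp (V (ξ n ω' - 1) - V a)| := by rw [mul_one]
  -- compute the conditional expectation
  have e0 : μ[fun ω' => lyap V a (ξ (n + 1) ω') | ℱ n] =ᵐ[μ] μ[G + U * IA n - D * IB n | ℱ n] :=
    condExp_congr_ae hae
  have e1 : μ[G + U * IA n - D * IB n | ℱ n]
      =ᵐ[μ] μ[G + U * IA n | ℱ n] - μ[D * IB n | ℱ n] :=
    condExp_sub (intG.add intUIA) intDIB (ℱ n)
  have e2 : μ[G + U * IA n | ℱ n] =ᵐ[μ] μ[G | ℱ n] + μ[U * IA n | ℱ n] :=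
    condExp_add intG intUIA (ℱ n)
  have e3 : μ[G | ℱ n] =ᵐ[μ] G :=
    Filter.EventuallyEq.of_eq (condExp_of_stronglyMeasurable (ℱ.le n) (hcompF n _) intG)
  have e4 : μ[U * IA n | ℱ n]
      =ᵐ[μ] U * fun ω' => ωp (ξ n ω') / (ωp (ξ n ω') + ωm (ξ n ω')) :=
    (condExp_mul_of_stronglyMeasurable_left (hcompF n fun x => Real.exp (V x - V a)) intUIA (intIA n)).trans
      (Filter.EventuallyEq.mul (Filter.EventuallyEq.refl _ U) (hstep_up n))
  have e5 : μ[D * IB n | ℱ n]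
      =ᵐ[μ] D * fun ω' => ωm (ξ n ω') / (ωp (ξ n ω') + ωm (ξ n ω')) :=
    (condExp_mul_of_stronglyMeasurable_left (hcompF n fun x => Real.exp (V (x - 1) - V a)) intDIB (intIB n)).trans
      (Filter.EventuallyEq.mul (Filter.EventuallyEq.refl _ D) (hstep_down n))
  have efin : (G + (U * fun ω' => ωp (ξ n ω') / (ωp (ξ n ω') + ωm (ξ n ω')))
      - D * fun ω' => ωm (ξ n ω') / (ωp (ξ n ω') + ωm (ξ n ω'))) = G := by
    funext ω'
    simp only [Pi.add_apply, Pi.sub_apply, Pi.mul_apply]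
    have := hpt (ξ n ω')
    simp only [hU, hD]
    linarith
  refine Filter.EventuallyEq.symm ?_
  calc μ[fun ω' => lyap V a (ξ (n + 1) ω') | ℱ n]
      =ᵐ[μ] μ[G + U * IA n | ℱ n] - μ[D * IB n | ℱ n] := e0.trans e1
    _ =ᵐ[μ] (G + (U * fun ω' => ωp (ξ n ω') / (ωp (ξ n ω') + ωm (ξ n ω')))
          - D * fun ω' => ωm (ξ n ω') / (ωp (ξ n ω') + ωm (ξ n ω'))) := by
        exact Filter.EventuallyEq.sub ((e2.trans (Filter.EventuallyEq.add e3 e4))) e5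
    _ = G := efin
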